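/- Let R be a commutative integral domain with fraction field K. Suppose X, Y, Z are matrices over R and g ∈ K is such that I = g·X + Y·Z in K^{n×n}. Then there exist matrices X̃, Z̃ over R such that X̃ is invertible over K (det X̃ ≠ 0) and I = g·X̃ + Y·Z̃. -/

import Mathlib

open Matrix

lemma aux_key {K : Type*} [Field K] {n p : ℕ} (A : Matrix (Fin n) (Fin n) K)
    (B : Matrix (Fin n) (Fin p) K) (W : Matrix (Fin p) (Fin n) K) (i : Fin p) (j : Fin n)
    (t : K) :
    A + B * W.updateRow i (Function.update (W i) j t) =
      (A + B * W.updateRow i (Function.update (W i) j 0)).updateCol j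
        (fun r => (A + B * W.updateRow i (Function.update (W i) j 0)) r j + t * B r i) := by
  ext r k
  by_cases hk : k = j
  · subst hk
    simp only [updateCol_apply, if_pos rfl, Matrix.add_apply, Matrix.mul_apply,
      updateRow_apply, Function.update, eq_rec_constant, dite_eq_ite, if_true]
    have h1 : ∀ x : Fin p, B r x * (if x = i then t else W x k) =
        (B r x * if x = i then 0 else W x k) + (if x = i then B r x * t else 0) := by
      intro x; by_cases hx : x = i <;> simp [hx]
    rw [Finset.sum_congr rfl (fun x _ => h1 x), Finset.sum_add_distrib,
      Finset.sum_ite_eq' Finset.univ i (fun x => B r x * t)]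
    simp [mul_comm]
    ring
  · simp only [updateCol_apply, if_neg hk, Matrix.add_apply, Matrix.mul_apply,
      updateRow_apply, Function.update]
    simp [hk]

lemma aux_affine {K : Type*} [Field K] {n p : ℕ} (A : Matrix (Fin n) (Fin n) K)
    (B : Matrix (Fin n) (Fin p) K) (W : Matrix (Fin p) (Fin n) K) (i : Fin p) (j : Fin n)
    (t : K) :
    (A + B * W.updateRow i (Function.update (W i) j t)).det =
      (A + B * W.updateRow i (Function.update (W i) j 0)).det +
        t * ((A + B * W.updateRow i (Function.update (W i) j 0)).updateCol j
          (fun r => B r i)).det := by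
  set N := A + B * W.updateRow i (Function.update (W i) j 0) with hN
  rw [aux_key]
  have : (fun r => N r j + t * B r i) = (fun r => N r j) + t • (fun r => B r i) := by
    funext r; simp [smul_eq_mul]
  rw [this, det_updateCol_add, det_updateCol_smul, updateCol_eq_self]

open Classical in
lemma aux_main {K : Type*} [Field K] {n p : ℕ} (A : Matrix (Fin n) (Fin n) K)
    (B : Matrix (Fin n) (Fin p) K) (S : Set K) (h0 : (0 : K) ∈ S) (h1 : (1 : K) ∈ S) :
    ∀ (k : ℕ) (W : Matrix (Fin p) (Fin n) K),
      (Finset.univ.filter (fun q : Fin p × Fin n => W q.1 q.2 ∉ S)).card ≤ k →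
      (A + B * W).det ≠ 0 →
      ∃ W' : Matrix (Fin p) (Fin n) K, (∀ i j, W' i j ∈ S) ∧ (A + B * W').det ≠ 0 := by
  intro k
  induction k with
  | zero =>
    intro W hc hd
    refine ⟨W, fun i j => ?_, hd⟩
    by_contra hij
    have hm : (i, j) ∈ Finset.univ.filter (fun q : Fin p × Fin n => W q.1 q.2 ∉ S) := by
      simp only [Finset.mem_filter, Finset.mem_univ, true_and]; exact hij
    have := Finset.card_pos.mpr ⟨_, hm⟩
    omega
  | succ k ih =>
    intro W hc hd
    by_cases hall : ∀ i j, W i j ∈ S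
    · exact ⟨W, hall, hd⟩
    · push_neg at hall
      obtain ⟨i, j, hij⟩ := hall
      set Wt : K → Matrix (Fin p) (Fin n) K :=
        fun t => W.updateRow i (Function.update (W i) j t) with hWt
      have hWself : Wt (W i j) = W := by
        rw [hWt]; simp [Function.update_eq_self, updateRow_eq_self]
      have haff := fun t => aux_affine A B W i j t
      have hdW : (A + B * Wt (W i j)).det ≠ 0 := by rw [hWself]; exact hd
      have hex : ∃ t : K, t ∈ S ∧ (A + B * Wt t).det ≠ 0 := by
        by_cases h00 : (A + B * Wt 0).det ≠ 0
        · exact ⟨0, h0, h00⟩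
        · push_neg at h00
          refine ⟨1, h1, ?_⟩
          rw [hWt] at h00 ⊢
          rw [haff 1, h00, zero_add, one_mul]
          intro hcon
          apply hdW
          rw [hWt, haff (W i j), h00, zero_add, hcon, mul_zero]
      obtain ⟨t, htS, htd⟩ := hex
      have hsub : (Finset.univ.filter (fun q : Fin p × Fin n => (Wt t) q.1 q.2 ∉ S)) ⊆
          (Finset.univ.filter (fun q : Fin p × Fin n => W q.1 q.2 ∉ S)).erase (i, j) := by
        intro q hq
        simp only [Finset.mem_filter, Finset.mem_univ, true_and] at hq
        have hqne : q ≠ (i, j) := by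
          rintro rfl
          apply hq
          simpa [hWt, updateRow_apply, Function.update] using htS
        refine Finset.mem_erase.mpr ⟨hqne, ?_⟩
        simp only [Finset.mem_filter, Finset.mem_univ, true_and]
        intro hWq
        apply hq
        have heq : (Wt t) q.1 q.2 = W q.1 q.2 := by
          rw [hWt]
          rcases q with ⟨a, b⟩
          by_cases ha : a = i
          · subst ha
            have hb : b ≠ j := by
              intro hb; apply hqne; rw [hb]
            simp [updateRow_apply, Function.update, hb]
          · simp [updateRow_apply, ha]
        rw [heq]; exact hWq
      have hmem : (i, j) ∈ Finset.univ.filter (fun q : Fin p × Fin n => W q.1 q.2 ∉ S) := by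
        simp only [Finset.mem_filter, Finset.mem_univ, true_and]; exact hij
      have hcard : (Finset.univ.filter (fun q : Fin p × Fin n => (Wt t) q.1 q.2 ∉ S)).card ≤ k := by
        have h2 := Finset.card_le_card hsub
        rw [Finset.card_erase_of_mem hmem] at h2
        omega
      exact ih (Wt t) hcard htd

lemma map_smul_matrix {R K : Type*} [CommRing R] [CommRing K] (φ : R →+* K) {n m : ℕ}
    (b : R) (M : Matrix (Fin n) (Fin m) R) :
    (b • M).map φ = φ b • M.map φ := by
  ext i j; simp [Matrix.map_apply, _root_.map_mul]

lemma map_sub_matrix {R K : Type*} [CommRing R] [CommRing K] (φ : R →+* K) {n m : ℕ}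
    (M N : Matrix (Fin n) (Fin m) R) :
    (M - N).map φ = M.map φ - N.map φ := by
  ext i j; simp [Matrix.map_apply, map_sub]

theorem stmt3 (R : Type*) [CommRing R] [IsDomain R] (n p : ℕ)
    (X : Matrix (Fin n) (Fin n) R) (Y : Matrix (Fin n) (Fin p) R) (Z : Matrix (Fin p) (Fin n) R)
    (g : FractionRing R)
    (h : (1 : Matrix (Fin n) (Fin n) (FractionRing R)) =
      g • X.map (algebraMap R (FractionRing R)) +
        Y.map (algebraMap R (FractionRing R)) * Z.map (algebraMap R (FractionRing R))) :
    ∃ (X' : Matrix (Fin n) (Fin n) R) (Z' : Matrix (Fin p) (Fin n) R),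
      (X'.map (algebraMap R (FractionRing R))).det ≠ 0 ∧
      (1 : Matrix (Fin n) (Fin n) (FractionRing R)) =
        g • X'.map (algebraMap R (FractionRing R)) +
          Y.map (algebraMap R (FractionRing R)) * Z'.map (algebraMap R (FractionRing R)) := by
  classical
  set φ := algebraMap R (FractionRing R) with hφ
  by_cases hg : g = 0
  · refine ⟨1, Z, ?_, ?_⟩
    · rw [show ((1 : Matrix (Fin n) (Fin n) R)).map φ = 1 from
        Matrix.map_one φ (map_zero φ) (map_one φ)]
      simp
    · rw [hg] at h ⊢
      rw [show ((1 : Matrix (Fin n) (Fin n) R)).map φ = 1 from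
        Matrix.map_one φ (map_zero φ) (map_one φ)]
      simpa using h
  · obtain ⟨a, b, hb, hab⟩ := IsFractionRing.div_surjective (A := R) g
    have hbne : φ b ≠ 0 :=
      IsFractionRing.to_map_ne_zero_of_mem_nonZeroDivisors (K := FractionRing R) hb
    have hgb : g * φ b = φ a := by
      rw [← hab, hφ]; field_simp
      exact mul_div_cancel_right₀ _ hbne
    set A := X.map φ with hA
    set B := φ b • Y.map φ with hB
    set W0 : Matrix (Fin p) (Fin n) (FractionRing R) := (g * φ b)⁻¹ • Z.map φ with hW0
    have hgbne : g * φ b ≠ 0 := mul_ne_zero hg hbne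
    have hd0 : (A + B * W0).det ≠ 0 := by
      have e2 : B * W0 = (φ b * (g * φ b)⁻¹) • (Y.map φ * Z.map φ) := by
        rw [hB, hW0, Matrix.smul_mul, Matrix.mul_smul, smul_smul]
      have e1 : φ b * (g * φ b)⁻¹ = g⁻¹ := by
        field_simp
      have e3 : A + B * W0 = g⁻¹ • (1 : Matrix (Fin n) (Fin n) (FractionRing R)) := by
        rw [e2, e1, h, smul_add, smul_smul, inv_mul_cancel₀ hg, one_smul, hA]
      rw [e3, Matrix.smul_one_eq_diagonal, Matrix.det_diagonal]
      simp only [Finset.prod_const, Finset.card_univ, Fintype.card_fin]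
      exact pow_ne_zero _ (inv_ne_zero hg)
    obtain ⟨W', hW'S, hW'd⟩ := aux_main A B (Set.range φ) ⟨0, map_zero φ⟩ ⟨1, map_one φ⟩
      (Finset.univ.filter (fun q : Fin p × Fin n => W0 q.1 q.2 ∉ Set.range φ)).card W0 le_rfl hd0
    choose Wf hWf using hW'S
    set W : Matrix (Fin p) (Fin n) R := Matrix.of (fun i j => Wf i j) with hW
    have hWmap : W.map φ = W' := by
      ext i j; exact hWf i j
    have hXmap : (X + b • (Y * W)).map φ = A + B * W' := by
      rw [Matrix.map_add _ (map_add φ), map_smul_matrix, Matrix.map_mul, hWmap, hA, hB, Matrix.smul_mul]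
    refine ⟨X + b • (Y * W), Z - a • W, ?_, ?_⟩
    · rw [hXmap]; exact hW'd
    · rw [hXmap, map_sub_matrix, map_smul_matrix, hWmap]
      rw [smul_add, hB, Matrix.smul_mul, smul_smul, hgb, Matrix.mul_sub, Matrix.mul_smul, h]
      abel
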